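/- For any fixed λ ∈ (0, 1/3], the map (i_n) ↦ (1-λ)·∑_{n≥1} i_n·λ^{n-1} from {-1,0,1}^ℕ to ℝ is monotone increasing with respect to the lexicographical order; moreover, if λ ∈ (0,1/3) it is strictly increasing. -/

import Mathlib

open scoped Pointwise

/-- `PiFun i λ = (1-λ) ∑_{n≥0} i_n λ^n`, the series Π from the paper (0-based indexing). -/
noncomputable def PiFun (i : ℕ → ℝ) (l : ℝ) : ℝ := (1 - l) * ∑' n : ℕ, i n * l ^ n

/-- `i` is a sequence over the alphabet `{-1,0,1}`. -/
def IsCoding (i : ℕ → ℝ) : Prop := ∀ n, i n = -1 ∨ i n = 0 ∨ i n = 1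

/-- Strict lexicographic order on sequences. -/
def LexLt (i j : ℕ → ℝ) : Prop := ∃ m, (∀ n, n < m → i n = j n) ∧ i m < j m

/-- Non-strict lexicographic order on sequences. -/
def LexLe (i j : ℕ → ℝ) : Prop := LexLt i j ∨ i = j

-- `rho i j = 3^{-k}` where `k` is the first (0-based) index at which the sequences differ
-- (this equals `3^{1-k}` for 1-based indexing as in the paper).
open Classical in
noncomputable def rho (i j : ℕ → ℝ) : ℝ :=
  if i = j then 0 else (3 : ℝ) ^ (-((sInf {n : ℕ | i n ≠ j n} : ℕ) : ℤ))

/-- The middle-`(1-2λ)` Cantor set `C_λ`. -/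
def Cset (l : ℝ) : Set ℝ :=
  {x | ∃ i : ℕ → ℝ, (∀ n, i n = 0 ∨ i n = 1) ∧ x = (1 - l) * ∑' n : ℕ, i n * l ^ n}

/-- `Λ(t) = {λ ∈ (0,1/3] : t ∈ C_λ - C_λ}`. -/
def Lam (t : ℝ) : Set ℝ := {l | l ∈ Set.Ioc (0 : ℝ) (1/3) ∧ t ∈ Cset l - Cset l}

lemma coding_abs_le (i : ℕ → ℝ) (hi : IsCoding i) (n : ℕ) : |i n| ≤ 1 := by
  rcases hi n with h | h | h <;> simp [h]

lemma coding_summable (i : ℕ → ℝ) (hi : IsCoding i) {l : ℝ} (h0 : 0 < l) (h1 : l < 1) :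
    Summable (fun n => i n * l ^ n) := by
  apply Summable.of_abs
  apply Summable.of_nonneg_of_le (fun n => abs_nonneg _) (fun n => ?_)
    (summable_geometric_of_lt_one h0.le h1)
  rw [abs_mul, abs_pow, abs_of_pos h0]
  calc |i n| * l ^ n ≤ 1 * l ^ n := by gcongr; exact coding_abs_le i hi n
  _ = l ^ n := one_mul _

theorem stmt1 (l : ℝ) (hl : l ∈ Set.Ioc (0 : ℝ) (1/3)) (i j : ℕ → ℝ)
    (hi : IsCoding i) (hj : IsCoding j) (hij : LexLt i j) :
    PiFun i l ≤ PiFun j l ∧ (l < 1/3 → PiFun i l < PiFun j l) := by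
  obtain ⟨h0, h13⟩ := hl
  have h1 : l < 1 := by linarith
  obtain ⟨m, hm, hmlt⟩ := hij
  have hsi := coding_summable i hi h0 h1
  have hsj := coding_summable j hj h0 h1
  have hsd : Summable (fun n => (j n - i n) * l ^ n) := by
    have := hsj.sub hsi
    refine this.congr fun n => ?_
    ring
  -- difference of the two series
  have hdiff : PiFun j l - PiFun i l = (1 - l) * ∑' n, (j n - i n) * l ^ n := by
    unfold PiFun
    rw [← mul_sub, ← hsj.tsum_sub hsi]
    congr 1
    exact tsum_congr fun n => by ring
  -- split off the first m terms, which vanish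
  have hsplit : ∑' n, (j n - i n) * l ^ n = ∑' n, (j (n + m) - i (n + m)) * l ^ (n + m) := by
    rw [← hsd.sum_add_tsum_nat_add m]
    have : ∑ n ∈ Finset.range m, (j n - i n) * l ^ n = 0 := by
      apply Finset.sum_eq_zero
      intro n hn
      rw [hm n (Finset.mem_range.mp hn)]
      ring
    rw [this, zero_add]
  -- the tail summable
  have hstail : Summable (fun n => (j (n + m) - i (n + m)) * l ^ (n + m)) :=
    hsd.comp_injective (add_left_injective m)
  -- the lower bound sequence
  set g : ℕ → ℝ := fun n => (if n = 0 then 1 else -2 * l ^ n) * l ^ m with hg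
  have hgeq : g = fun n => (-2 * l ^ n) * l ^ m + (if n = 0 then 3 * l ^ m else 0) := by
    funext n
    by_cases h : n = 0 <;> simp [hg, h] <;> ring
  have hsg2 : Summable (fun n : ℕ => (-2 * l ^ n) * l ^ m) := by
    apply Summable.mul_right
    exact (summable_geometric_of_lt_one h0.le h1).mul_left _
  have hsg : Summable g := by
    rw [hgeq]
    exact hsg2.add (summable_of_finite_support (by
      apply Set.Finite.subset (Set.finite_singleton 0)
      intro n hn
      simp only [Set.mem_singleton_iff]
      by_contra hne
      exact hn (if_neg hne)))
  have hgsum : ∑' n, g n = (1 - 3 * l) / (1 - l) * l ^ m := by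
    rw [hgeq, hsg2.tsum_add (summable_of_finite_support (by
      apply Set.Finite.subset (Set.finite_singleton 0)
      intro n hn
      simp only [Set.mem_singleton_iff]
      by_contra hne
      exact hn (if_neg hne)))]
    have h2 : ∑' n : ℕ, (-2 * l ^ n) * l ^ m = (-2 * (1 - l)⁻¹) * l ^ m := by
      rw [tsum_mul_right]
      congr 1
      rw [tsum_mul_left, tsum_geometric_of_lt_one h0.le h1]
    have h3 : ∑' n : ℕ, (if n = 0 then 3 * l ^ m else 0) = 3 * l ^ m := by
      rw [tsum_eq_single 0 (fun b hb => by simp [hb])]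
      simp
    rw [h2, h3]
    have hne : (1:ℝ) - l ≠ 0 := by linarith
    field_simp
    ring
  -- termwise bound
  have hterm : ∀ n, g n ≤ (j (n + m) - i (n + m)) * l ^ (n + m) := by
    intro n
    by_cases h : n = 0
    · subst h
      have hg0 : g 0 = l ^ m := by simp [hg]
      rw [hg0]
      simp only [zero_add]
      have h1m : 1 ≤ j m - i m := by
        rcases hi m with a | a | a <;> rcases hj m with b | b | b <;>
          rw [a, b] at hmlt ⊢ <;> linarith
      have := pow_pos h0 m
      nlinarith
    · simp only [hg, if_neg h]
      have hd : -2 ≤ j (n + m) - i (n + m) := by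
        rcases hi (n + m) with a | a | a <;> rcases hj (n + m) with b | b | b <;>
          rw [a, b] <;> norm_num
      have hp : (0:ℝ) < l ^ (n + m) := pow_pos h0 _
      calc -2 * l ^ n * l ^ m = -2 * l ^ (n + m) := by rw [pow_add]; ring
      _ ≤ (j (n + m) - i (n + m)) * l ^ (n + m) := by nlinarith
  have hkey : (1 - 3 * l) / (1 - l) * l ^ m ≤ ∑' n, (j (n + m) - i (n + m)) * l ^ (n + m) := by
    rw [← hgsum]
    exact Summable.tsum_le_tsum hterm hsg hstail
  have hfinal : l ^ m * (1 - 3 * l) ≤ PiFun j l - PiFun i l := by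
    rw [hdiff, hsplit]
    have h1l : (0:ℝ) < 1 - l := by linarith
    calc l ^ m * (1 - 3 * l) = (1 - l) * ((1 - 3 * l) / (1 - l) * l ^ m) := by
          field_simp
    _ ≤ (1 - l) * ∑' n, (j (n + m) - i (n + m)) * l ^ (n + m) := by
          apply mul_le_mul_of_nonneg_left hkey h1l.le
  have hp := pow_pos h0 m
  constructor
  · nlinarith
  · intro h
    nlinarith
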